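/- Let s ≥ 1 and u ∈ [0,1]. Then for every x ∈ (0,1), the derivative of h_{u,s} at x equals (x² / ((1-x²)·(1-u·x²)²)) · T_{u,s}(x²), where T_{u,s}(X) = (1-s)·u²·X² - (2 - 3s - s·u)·u·X + (1 - 3·s·u). -/

import Mathlib

noncomputable def A (a b : ℝ) : ℝ := (a + b) / 2

noncomputable def G (a b : ℝ) : ℝ := Real.sqrt (a * b)

noncomputable def H (a b : ℝ) : ℝ := 2 * a * b / (a + b)

noncomputable def I (a b : ℝ) : ℝ :=
  (1 / Real.exp 1) * (a ^ a / b ^ b) ^ (1 / (a - b))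

noncomputable def Q (t s a b : ℝ) : ℝ :=
  G (t * a + (1 - t) * b) (t * b + (1 - t) * a) ^ s * A a b ^ (1 - s)

noncomputable def f (u s x : ℝ) : ℝ :=
  1 - (1 / (2 * x)) * Real.log ((1 + x) / (1 - x))
    - (1 / 2) * Real.log (1 - x ^ 2) + (s / 2) * Real.log (1 - u * x ^ 2)

noncomputable def h (u s x : ℝ) : ℝ :=
  -x + (1 / 2) * Real.log ((1 + x) / (1 - x)) - s * u * x ^ 3 / (1 - u * x ^ 2)

noncomputable def T (u s X : ℝ) : ℝ :=
  (1 - s) * u^2 * X^2 - (2 - 3*s - s*u) * u * X + (1 - 3*s*u)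

theorem stmt_14 (s u : ℝ) (hs : 1 ≤ s) (hu : u ∈ Set.Icc (0:ℝ) 1) :
    ∀ x ∈ Set.Ioo (0:ℝ) 1,
      HasDerivAt (h u s) (x^2 / ((1 - x^2) * (1 - u*x^2)^2) * T u s (x^2)) x := by
  obtain ⟨hu0, hu1⟩ := hu
  intro x hx
  obtain ⟨hx0, hx1⟩ := hx
  have h1px : (0:ℝ) < 1 + x := by linarith
  have h1mx : (0:ℝ) < 1 - x := by linarith
  have hx2 : (0:ℝ) < 1 - x^2 := by nlinarith
  have hux : (0:ℝ) < 1 - u * x^2 := by nlinarith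
  have hq : HasDerivAt (fun x : ℝ => (1 + x) / (1 - x))
      ((1 * (1 - x) - (1 + x) * (-1)) / (1 - x)^2) x := by
    exact HasDerivAt.div ((hasDerivAt_id x).const_add 1)
      ((hasDerivAt_id x).neg.const_add 1) (ne_of_gt h1mx)
  have hlog : HasDerivAt (fun x : ℝ => Real.log ((1 + x) / (1 - x)))
      (((1 * (1 - x) - (1 + x) * (-1)) / (1 - x)^2) / ((1 + x) / (1 - x))) x :=
    hq.log (ne_of_gt (div_pos h1px h1mx))
  have hnum : HasDerivAt (fun x : ℝ => s * u * x ^ 3) (s * u * (3 * x ^ 2)) x := by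
    simpa using (hasDerivAt_pow 3 x).const_mul (s * u)
  have hden : HasDerivAt (fun x : ℝ => 1 - u * x ^ 2) (-(u * (2 * x))) x := by
    simpa using ((hasDerivAt_pow 2 x).const_mul u).const_sub 1
  have hrat : HasDerivAt (fun x : ℝ => s * u * x ^ 3 / (1 - u * x ^ 2))
      ((s * u * (3 * x ^ 2) * (1 - u * x ^ 2) - s * u * x ^ 3 * (-(u * (2 * x)))) /
        (1 - u * x ^ 2) ^ 2) x :=
    hnum.div hden (ne_of_gt hux)
  have H := ((hasDerivAt_id x).neg.add (hlog.const_mul (1/2 : ℝ))).sub hrat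
  convert H using 1
  · rfl
  · rfl
  · rfl
  unfold T
  have hux' : 1 - x ^ 2 * u ≠ 0 := by rw [mul_comm]; exact ne_of_gt hux
  have hx2' : 1 - x ^ 2 ≠ 0 := ne_of_gt hx2
  have h1mx' : 1 - x ≠ 0 := ne_of_gt h1mx
  have h1px' : 1 + x ≠ 0 := ne_of_gt h1px
  field_simp
  ring
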